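/- Let n ≥ 3 and consider the building-block graph B_n with nodes a_1,…,a_n and b_1,…,b_{n-1}, where for each i ∈ {1,…,n−1} there is an edge (a_i, a_{i+1}) with delay 1 and edges (a_i, b_i), (b_i, a_{i+1}) with delay 0, and all edges have capacity 1. Then the minimum, over all feasible (fractional) flows of rate R = (n−1)/(n−2) from a_1 to a_n, of the maximum delay D(f) equals 1. In particular, since R > 1 and the unique zero-delay a_1–a_n path carries at most unit rate, any feasible flow of rate R must have a flow-carrying path of delay at least 1. -/

import Mathlib

/-- A directed network: each edge has a source node, a destination node,
a non-negative integer capacity and a non-negative integer delay. -/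
structure Network (V : Type) (E : Type) where
  src : E → V
  dst : E → V
  cap : E → ℕ
  delay : E → ℕ

namespace Network

variable {V E : Type}

/-- `N.IsPath s t p` : the list of edges `p` forms a directed path from `s` to `t`. -/
def IsPath (N : Network V E) : V → V → List E → Prop
  | s, t, [] => s = t
  | s, t, e :: es => N.src e = s ∧ N.IsPath (N.dst e) t es

/-- The delay of a path: the sum of the delays of its edges. -/
def pathDelay (N : Network V E) (p : List E) : ℕ := (p.map N.delay).sum

end Network

/-- A (path-based) flow from `s` to `t`: a finitely-supported assignment of
non-negative rates to `s`–`t` paths. -/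
structure PathFlow {V E : Type} (N : Network V E) (s t : V) where
  f : List E →₀ ℝ
  nonneg : ∀ p, 0 ≤ f p
  isPath : ∀ p ∈ f.support, N.IsPath s t p

namespace PathFlow

variable {V E : Type} [DecidableEq E] {N : Network V E} {s t : V}

/-- Total rate of the flow. -/
noncomputable def totalRate (F : PathFlow N s t) : ℝ := ∑ p ∈ F.f.support, F.f p

/-- Rate carried by edge `e`: the sum of the rates of all paths containing `e`. -/
noncomputable def edgeRate (F : PathFlow N s t) (e : E) : ℝ :=
  ∑ p ∈ F.f.support, if e ∈ p then F.f p else 0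

/-- Feasibility with rate `R`: total rate is `R` and every edge capacity is respected. -/
def Feasible (F : PathFlow N s t) (R : ℝ) : Prop :=
  F.totalRate = R ∧ ∀ e, F.edgeRate e ≤ (N.cap e : ℝ)

/-- The maximum delay over flow-carrying paths. -/
def maxDelay (F : PathFlow N s t) : ℕ := F.f.support.sup N.pathDelay

/-- An integer flow assigns a non-negative integer rate to every path. -/
def IsInteger (F : PathFlow N s t) : Prop := ∀ p, ∃ m : ℕ, F.f p = (m : ℝ)

end PathFlow
/-- Nodes of the partition-reduction graph `G'`: `Sum.inl i` is `w_i` (`i = 0,…,n`),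
`Sum.inr i` is `v_{i+1}` (`i = 0,…,n-1`). -/
abbrev GV (n : ℕ) := Fin (n + 1) ⊕ Fin n

/-- Edges of `G'`: `Sum.inl i` is the direct edge `(w_i, w_{i+1})` of delay `a i`;
`Sum.inr (Sum.inl i)` is `(w_i, v_{i+1})` and `Sum.inr (Sum.inr i)` is `(v_{i+1}, w_{i+1})`,
both of delay `0`. All edges have capacity `1`. -/
abbrev GE (n : ℕ) := Fin n ⊕ (Fin n ⊕ Fin n)

/-- The graph `G'` reduced from the partition problem. -/
def Gpart (n : ℕ) (a : Fin n → ℕ) : Network (GV n) (GE n) where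
  src
    | Sum.inl i => Sum.inl i.castSucc
    | Sum.inr (Sum.inl i) => Sum.inl i.castSucc
    | Sum.inr (Sum.inr i) => Sum.inr i
  dst
    | Sum.inl i => Sum.inl i.succ
    | Sum.inr (Sum.inl i) => Sum.inr i
    | Sum.inr (Sum.inr i) => Sum.inl i.succ
  cap := fun _ => 1
  delay
    | Sum.inl i => a i
    | Sum.inr _ => 0

/-- The building-block graph `B_n` of Fig. 3: spine nodes `a_1,…,a_n`
(`Sum.inl i` = `a_{i+1}`) and detour nodes `b_1,…,b_{n-1}` (`Sum.inr i` = `b_{i+1}`);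
for each of the `n - 1` layers there is a direct edge `(a_i, a_{i+1})` of delay `1` and
a zero-delay two-edge route `(a_i, b_i), (b_i, a_{i+1})`; all edges have capacity `1`. -/
abbrev Bblock (n : ℕ) : Network (GV (n - 1)) (GE (n - 1)) :=
  Gpart (n - 1) (fun _ => 1)

/-- The source `a_1` of `B_n`. -/
abbrev BblockSrc (n : ℕ) : GV (n - 1) := Sum.inl 0

/-- The sink `a_n` of `B_n`. -/
abbrev BblockSink (n : ℕ) : GV (n - 1) := Sum.inl (Fin.last (n - 1))


section Aux

open Network

/-- One layer of the flow path `p_i`: the direct (delay-1) edge at layer `i`,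
the two-edge detour at every other layer. -/
def myLayer (m : ℕ) (i j : Fin m) : List (GE m) :=
  if j = i then [Sum.inl j] else [Sum.inr (Sum.inl j), Sum.inr (Sum.inr j)]

/-- The tail of the path `p_i` from node `w_j` to the sink. -/
def myTail (m : ℕ) (i : Fin m) (j : ℕ) : List (GE m) :=
  if h : j < m then myLayer m i ⟨j, h⟩ ++ myTail m i (j + 1) else []
  termination_by m - j

lemma isPath_append {V E : Type} (N : Network V E) {s u t : V} {p q : List E}
    (hp : N.IsPath s u p) (hq : N.IsPath u t q) : N.IsPath s t (p ++ q) := by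
  induction p generalizing s with
  | nil => cases hp; simpa using hq
  | cons e es ih => exact ⟨hp.1, ih hp.2⟩

lemma myLayer_isPath {m : ℕ} (i : Fin m) (j : ℕ) (hj : j < m) :
    (Gpart m fun _ => 1).IsPath (Sum.inl ⟨j, by omega⟩) (Sum.inl ⟨j + 1, by omega⟩)
      (myLayer m i ⟨j, hj⟩) := by
  unfold myLayer
  split <;>
  simp [Network.IsPath, Gpart, Fin.castSucc_mk, Fin.succ_mk]

lemma myTail_isPath {m : ℕ} (i : Fin m) : ∀ (j : ℕ) (hj : j ≤ m),
    (Gpart m fun _ => 1).IsPath (Sum.inl ⟨j, by omega⟩) (Sum.inl (Fin.last m)) (myTail m i j)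
  | j, hj => by
    rw [myTail]
    by_cases h : j < m
    · rw [dif_pos h]
      exact isPath_append _ (myLayer_isPath i j h) (myTail_isPath i (j + 1) h)
    · rw [dif_neg h]
      have hjm : j = m := by omega
      subst hjm
      exact rfl
  termination_by j => m - j

lemma mem_myTail {m : ℕ} {x : GE m} (i : Fin m) : ∀ j : ℕ,
    x ∈ myTail m i j ↔ ∃ (k : ℕ) (hk : k < m), j ≤ k ∧ x ∈ myLayer m i ⟨k, hk⟩
  | j => by
    rw [myTail]
    by_cases h : j < m
    · rw [dif_pos h]
      rw [List.mem_append, mem_myTail i (j + 1)]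
      constructor
      · rintro (hx | ⟨k, hk, hjk, hx⟩)
        · exact ⟨j, h, le_refl _, hx⟩
        · exact ⟨k, hk, by omega, hx⟩
      · rintro ⟨k, hk, hjk, hx⟩
        rcases eq_or_lt_of_le hjk with rfl | hlt
        · exact Or.inl hx
        · exact Or.inr ⟨k, hk, by omega, hx⟩
    · rw [dif_neg h]
      simp only [List.not_mem_nil, false_iff]
      rintro ⟨k, hk, hjk, -⟩; omega
  termination_by j => m - j

lemma inl_mem_myTail {m : ℕ} (i k : Fin m) : Sum.inl k ∈ myTail m i 0 ↔ k = i := by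
  rw [mem_myTail]
  constructor
  · rintro ⟨j, hj, -, hx⟩
    unfold myLayer at hx
    split at hx
    · rename_i hji
      simp only [List.mem_singleton, Sum.inl.injEq] at hx
      rw [hx, hji]
    · simp at hx
  · rintro rfl
    exact ⟨k.val, k.isLt, Nat.zero_le _, by simp [myLayer]⟩

lemma inrl_mem_myTail {m : ℕ} (i k : Fin m) :
    Sum.inr (Sum.inl k) ∈ myTail m i 0 ↔ k ≠ i := by
  rw [mem_myTail]
  constructor
  · rintro ⟨j, hj, -, hx⟩
    unfold myLayer at hx
    split at hx
    · simp at hx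
    · rename_i hji
      simp only [List.mem_cons, List.mem_singleton] at hx
      rcases hx with hx | hx <;> simp_all
  · intro hk
    refine ⟨k.val, k.isLt, Nat.zero_le _, ?_⟩
    simp [myLayer, hk]

lemma inrr_mem_myTail {m : ℕ} (i k : Fin m) :
    Sum.inr (Sum.inr k) ∈ myTail m i 0 ↔ k ≠ i := by
  rw [mem_myTail]
  constructor
  · rintro ⟨j, hj, -, hx⟩
    unfold myLayer at hx
    split at hx
    · simp at hx
    · rename_i hji
      simp only [List.mem_cons, List.mem_singleton] at hx
      rcases hx with hx | hx <;> simp_all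
  · intro hk
    refine ⟨k.val, k.isLt, Nat.zero_le _, ?_⟩
    simp [myLayer, hk]

lemma delay_myLayer {m : ℕ} (i j : Fin m) :
    (Gpart m fun _ => 1).pathDelay (myLayer m i j) = if j = i then 1 else 0 := by
  unfold myLayer Network.pathDelay
  split <;> simp [Gpart]

lemma delay_myTail {m : ℕ} (i : Fin m) : ∀ j : ℕ,
    (Gpart m fun _ => 1).pathDelay (myTail m i j) = if j ≤ i.val then 1 else 0
  | j => by
    rw [myTail]
    by_cases h : j < m
    · rw [dif_pos h]
      have hsplit : (Gpart m fun _ => 1).pathDelay (myLayer m i ⟨j, h⟩ ++ myTail m i (j + 1))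
          = (Gpart m fun _ => 1).pathDelay (myLayer m i ⟨j, h⟩)
            + (Gpart m fun _ => 1).pathDelay (myTail m i (j + 1)) := by
        unfold Network.pathDelay
        rw [List.map_append, List.sum_append]
      rw [hsplit, delay_myLayer, delay_myTail i (j + 1)]
      simp only [Fin.ext_iff]
      split_ifs <;> omega
    · rw [dif_neg h]
      have hni : ¬ j ≤ i.val := by have := i.isLt; omega
      simp [Network.pathDelay, hni]
      exact not_le.mp hni
  termination_by j => m - j

lemma myTail_injective (m : ℕ) : Function.Injective (fun i : Fin m => myTail m i 0) := by
  intro i j hij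
  have hij' : myTail m i 0 = myTail m j 0 := hij
  have h1 : Sum.inl i ∈ myTail m j 0 := by
    rw [← hij']; exact (inl_mem_myTail i i).mpr rfl
  exact (inl_mem_myTail j i).mp h1

/-- The underlying function of the optimal flow. -/
noncomputable def myF (m : ℕ) : List (GE m) →₀ ℝ :=
  Finsupp.indicator (Finset.image (fun i : Fin m => myTail m i 0) Finset.univ)
    (fun _ _ => ((m : ℝ) - 1)⁻¹)

lemma myF_apply (m : ℕ) (p : List (GE m)) [DecidableEq (List (GE m))] :
    myF m p = if p ∈ Finset.image (fun i : Fin m => myTail m i 0) Finset.univ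
      then ((m : ℝ) - 1)⁻¹ else 0 := by
  rw [myF, Finsupp.indicator_apply]
  split <;> simp_all

/-- The optimal flow: each path `p_i` of delay `1` with rate `1/(m-1)`. -/
noncomputable def myFlow (m : ℕ) (hm : 2 ≤ m) :
    PathFlow (Gpart m fun _ => 1) (Sum.inl 0) (Sum.inl (Fin.last m)) where
  f := myF m
  nonneg := by
    intro p
    classical
    rw [myF_apply]
    have h1 : (1 : ℝ) ≤ (m : ℝ) - 1 := by
      have : (2 : ℝ) ≤ (m : ℝ) := by exact_mod_cast hm
      linarith
    split
    · positivity
    · exact le_refl 0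
  isPath := by
    intro p hp
    classical
    have hmem := Finsupp.support_indicator_subset _ _ hp
    simp only [myF, Finset.mem_coe, Finset.mem_image, Finset.mem_univ, true_and] at hmem
    obtain ⟨i, rfl⟩ := hmem
    have := myTail_isPath i 0 (Nat.zero_le m)
    simpa using this

lemma myFlow_value (m : ℕ) (hm : 2 ≤ m) (i : Fin m) :
    (myFlow m hm).f (myTail m i 0) = ((m : ℝ) - 1)⁻¹ := by
  classical
  show myF m (myTail m i 0) = _
  rw [myF_apply, if_pos (Finset.mem_image_of_mem _ (Finset.mem_univ i))]

lemma myFlow_support (m : ℕ) (hm : 2 ≤ m) :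
    (myFlow m hm).f.support = Finset.image (fun i : Fin m => myTail m i 0) Finset.univ := by
  classical
  have hc : ((m : ℝ) - 1)⁻¹ ≠ 0 := by
    have : (2 : ℝ) ≤ (m : ℝ) := by exact_mod_cast hm
    have : (m : ℝ) - 1 ≠ 0 := by linarith
    exact inv_ne_zero this
  ext p
  rw [Finsupp.mem_support_iff]
  show myF m p ≠ 0 ↔ _
  rw [myF_apply]
  split
  · simp only [hc, ne_eq, not_false_eq_true, true_iff]
    assumption
  · simp_all

lemma myFlow_total (m : ℕ) (hm : 2 ≤ m) :
    (myFlow m hm).totalRate = (m : ℝ) / ((m : ℝ) - 1) := by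
  classical
  unfold PathFlow.totalRate
  rw [myFlow_support m hm,
    Finset.sum_image (fun a _ b _ h => myTail_injective m h)]
  rw [Finset.sum_congr rfl (fun i _ => myFlow_value m hm i)]
  rw [Finset.sum_const, Finset.card_univ, Fintype.card_fin, nsmul_eq_mul]
  rw [div_eq_mul_inv]

lemma myFlow_edge (m : ℕ) (hm : 2 ≤ m) (e : GE m) :
    (myFlow m hm).edgeRate e ≤ 1 := by
  have h2 : (2 : ℝ) ≤ (m : ℝ) := by exact_mod_cast hm
  have h1 : (1 : ℝ) ≤ (m : ℝ) - 1 := by linarith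
  set c : ℝ := ((m : ℝ) - 1)⁻¹ with hc
  have hc0 : 0 ≤ c := by positivity
  have hc1 : c ≤ 1 := by
    rw [hc]
    exact inv_le_one_of_one_le₀ h1
  have hmc : ((m : ℝ) - 1) * c = 1 := mul_inv_cancel₀ (by linarith)
  unfold PathFlow.edgeRate
  rw [myFlow_support m hm,
    Finset.sum_image (fun a _ b _ h => myTail_injective m h)]
  simp only [myFlow_value m hm]
  match e with
  | Sum.inl k =>
      simp only [inl_mem_myTail]
      rw [Finset.sum_ite_eq]
      simp [hc1]
      exact hc1
  | Sum.inr (Sum.inl k) =>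
      simp only [inrl_mem_myTail, ne_eq, ite_not]
      have hstep : ∀ i : Fin m, (if k = i then (0 : ℝ) else c)
          = c - (if k = i then c else 0) := by
        intro i
        by_cases hki : k = i <;> simp [hki]
      rw [Finset.sum_congr rfl (fun i _ => hstep i), Finset.sum_sub_distrib,
        Finset.sum_const, Finset.card_univ, Fintype.card_fin, nsmul_eq_mul,
        Finset.sum_ite_eq]
      simp only [Finset.mem_univ, if_pos]
      nlinarith [hmc]
  | Sum.inr (Sum.inr k) =>
      simp only [inrr_mem_myTail, ne_eq, ite_not]
      have hstep : ∀ i : Fin m, (if k = i then (0 : ℝ) else c)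
          = c - (if k = i then c else 0) := by
        intro i
        by_cases hki : k = i <;> simp [hki]
      rw [Finset.sum_congr rfl (fun i _ => hstep i), Finset.sum_sub_distrib,
        Finset.sum_const, Finset.card_univ, Fintype.card_fin, nsmul_eq_mul,
        Finset.sum_ite_eq]
      simp only [Finset.mem_univ, if_pos]
      nlinarith [hmc]

lemma myFlow_feasible (m : ℕ) (hm : 2 ≤ m) :
    (myFlow m hm).Feasible ((m : ℝ) / ((m : ℝ) - 1)) := by
  refine ⟨myFlow_total m hm, fun e => ?_⟩
  have := myFlow_edge m hm e
  simpa [Gpart] using this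

lemma myFlow_maxDelay (m : ℕ) (hm : 2 ≤ m) : (myFlow m hm).maxDelay = 1 := by
  classical
  unfold PathFlow.maxDelay
  rw [myFlow_support m hm]
  apply le_antisymm
  · apply Finset.sup_le
    intro p hp
    simp only [Finset.mem_image, Finset.mem_univ, true_and] at hp
    obtain ⟨i, rfl⟩ := hp
    rw [delay_myTail i 0, if_pos (Nat.zero_le _)]
  · have hmem : myTail m (⟨0, by omega⟩ : Fin m) 0
        ∈ Finset.image (fun i : Fin m => myTail m i 0) Finset.univ :=
      Finset.mem_image_of_mem _ (Finset.mem_univ _)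
    calc 1 = (Gpart m fun _ => 1).pathDelay (myTail m (⟨0, by omega⟩ : Fin m) 0) := by
            rw [delay_myTail, if_pos (Nat.zero_le _)]
      _ ≤ _ := Finset.le_sup hmem

lemma zero_delay_first (m : ℕ) (hm : 1 ≤ m) (p : List (GE m))
    (hp : (Gpart m fun _ => 1).IsPath (Sum.inl 0) (Sum.inl (Fin.last m)) p)
    (hd : (Gpart m fun _ => 1).pathDelay p = 0) :
    Sum.inr (Sum.inl (⟨0, by omega⟩ : Fin m)) ∈ p := by
  match p with
  | [] =>
      exfalso
      have h1 : (Sum.inl 0 : GV m) = Sum.inl (Fin.last m) := hp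
      have h2 : (0 : Fin (m + 1)) = Fin.last m := by
        injection h1
      have h3 : (0 : ℕ) = m := congrArg Fin.val h2
      omega
  | e :: es =>
      obtain ⟨hsrc, -⟩ := hp
      match e with
      | Sum.inl i =>
          exfalso
          simp [Network.pathDelay, Gpart] at hd
      | Sum.inr (Sum.inl i) =>
          have hi : Fin.castSucc i = 0 := by
            simp only [Gpart] at hsrc
            injection hsrc
          have hival : i.val = 0 := congrArg Fin.val hi
          have hieq : i = (⟨0, by omega⟩ : Fin m) := Fin.ext hival
          rw [hieq]
          exact List.mem_cons_self
      | Sum.inr (Sum.inr i) =>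
          exfalso
          simp [Gpart] at hsrc

lemma exists_pos_delay (m : ℕ) (hm : 2 ≤ m)
    (F : PathFlow (Gpart m fun _ => 1) (Sum.inl 0) (Sum.inl (Fin.last m)))
    (hF : F.Feasible ((m : ℝ) / ((m : ℝ) - 1))) :
    ∃ p ∈ F.f.support, 1 ≤ (Gpart m fun _ => 1).pathDelay p := by
  classical
  by_contra hcon
  push_neg at hcon
  have hall : ∀ p ∈ F.f.support, (Gpart m fun _ => 1).pathDelay p = 0 := by
    intro p hp
    have := hcon p hp
    omega
  have he : F.totalRate ≤ F.edgeRate (Sum.inr (Sum.inl (⟨0, by omega⟩ : Fin m))) := by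
    unfold PathFlow.totalRate PathFlow.edgeRate
    apply Finset.sum_le_sum
    intro p hp
    rw [if_pos (zero_delay_first m (by omega) p (F.isPath p hp) (hall p hp))]
  have hcap : F.edgeRate (Sum.inr (Sum.inl (⟨0, by omega⟩ : Fin m))) ≤ 1 := by
    have := hF.2 (Sum.inr (Sum.inl (⟨0, by omega⟩ : Fin m)))
    simpa [Gpart] using this
  rw [hF.1] at he
  have h2 : (2 : ℝ) ≤ (m : ℝ) := by exact_mod_cast hm
  have hgt : 1 < (m : ℝ) / ((m : ℝ) - 1) := by
    rw [lt_div_iff₀ (by linarith)]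
    linarith
  linarith

end Aux

/-- **Lemma 3.** For `n ≥ 3`, the minimum over all feasible (fractional) flows of rate
`R = (n-1)/(n-2)` from `a_1` to `a_n` in `B_n` of the maximum delay `D(f)` equals `1`.
In particular, every feasible flow of this rate has a flow-carrying path of delay
at least `1`. -/
theorem bblock_min_max_delay (n : ℕ) (hn : 3 ≤ n) :
    IsLeast {D : ℕ | ∃ F : PathFlow (Bblock n) (BblockSrc n) (BblockSink n),
        F.Feasible (((n : ℝ) - 1) / ((n : ℝ) - 2)) ∧ F.maxDelay = D} 1 ∧
    (∀ F : PathFlow (Bblock n) (BblockSrc n) (BblockSink n),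
      F.Feasible (((n : ℝ) - 1) / ((n : ℝ) - 2)) →
      ∃ p ∈ F.f.support, 1 ≤ (Bblock n).pathDelay p) := by
  classical
  have hm : 2 ≤ n - 1 := by omega
  have hcast : ((n - 1 : ℕ) : ℝ) = (n : ℝ) - 1 := by
    have h1 : (1 : ℕ) ≤ n := by omega
    push_cast [Nat.cast_sub h1]
    ring
  have hR : ((n : ℝ) - 1) / ((n : ℝ) - 2)
      = ((n - 1 : ℕ) : ℝ) / (((n - 1 : ℕ) : ℝ) - 1) := by
    rw [hcast]
    ring_nf
  constructor
  · constructor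
    · exact ⟨myFlow (n - 1) hm, by rw [hR]; exact myFlow_feasible (n - 1) hm,
        myFlow_maxDelay (n - 1) hm⟩
    · rintro D ⟨F, hF, rfl⟩
      rw [hR] at hF
      obtain ⟨p, hp, hd⟩ := exists_pos_delay (n - 1) hm F hF
      calc 1 ≤ (Bblock n).pathDelay p := hd
        _ ≤ F.maxDelay := Finset.le_sup hp
  · intro F hF
    rw [hR] at hF
    exact exists_pos_delay (n - 1) hm F hF
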